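/- arXiv:2211.03225 — 4 statements merged into one kernel-verified Lean document; each statement's English description precedes it below -/
import Mathlib

section
/- Suppose the transition system is finitely branching and well-founded (no infinite transition sequences from any state, as holds for bounded processes). Then A₀ ≁_b A₁ (A₀ and A₁ are not bisimilar) with A₀ ∼ A₁ statically equivalent if and only if there exists a witness of non-bisimilarity W containing (A₀, A₁): a set W of pairs of statically equivalent states such that for every (B₀, B₁) ∈ W, there is b ∈ {0,1} and a transition B_b →^α B'_b such that for every matching sequence B_{1-b} ⟹^ᾱ B'_{1-b}, either B'₀ ≁ B'₁ (not statically equivalent) or (B'₀, B'₁) ∈ W. -/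
/-- Weak traces: sequences of transitions whose visible-action word is `w`. -/
inductive WTrace {S A : Type*} (step : S → A → S → Prop) (τ : A) : S → List A → S → Prop
  | refl (s : S) : WTrace step τ s [] s
  | tau {s s' t : S} {w : List A} : step s τ s' → WTrace step τ s' w t → WTrace step τ s w t
  | vis {s s' t : S} {a : A} {w : List A} :
      a ≠ τ → step s a s' → WTrace step τ s' w t → WTrace step τ s (a :: w) t

/-- The visible word ᾱ of an action. -/
def obsWord {A : Type*} [DecidableEq A] (τ a : A) : List A := if a = τ then [] else [a]

/-- A (symmetric) bisimulation contained in static equivalence, closed under matching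
transitions up to weak moves. -/
def IsBisimulation {S A : Type*} [DecidableEq A] (step : S → A → S → Prop) (τ : A)
    (eqv : S → S → Prop) (R : S → S → Prop) : Prop :=
  Symmetric R ∧
  ∀ X Y : S, R X Y → eqv X Y ∧
    ∀ (a : A) (X' : S), step X a X' → ∃ Y' : S, WTrace step τ Y (obsWord τ a) Y' ∧ R X' Y'

/-- Labelled bisimilarity: the largest symmetric bisimulation (via its union
characterization: two states are bisimilar iff some bisimulation relates them). -/
def Bisimilar {S A : Type*} [DecidableEq A] (step : S → A → S → Prop) (τ : A)
    (eqv : S → S → Prop) (X Y : S) : Prop :=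
  ∃ R : S → S → Prop, IsBisimulation step τ eqv R ∧ R X Y

/-- A witness of non-bisimilarity: a set `W` of pairs of statically equivalent states
such that for every `(B₀,B₁) ∈ W` there is `b ∈ {0,1}` and a transition `B_b →^α B'_b`
such that for every matching `B_{1-b} ⟹^ᾱ B'_{1-b}`, either the results are not
statically equivalent or the resulting pair is again in `W`. -/
def IsNonBisimWitness {S A : Type*} [DecidableEq A] (step : S → A → S → Prop) (τ : A)
    (eqv : S → S → Prop) (W : Set (S × S)) : Prop :=
  (∀ p ∈ W, eqv p.1 p.2) ∧
  ∀ p ∈ W,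
    (∃ (a : A) (B0' : S), step p.1 a B0' ∧
      ∀ B1' : S, WTrace step τ p.2 (obsWord τ a) B1' → ¬ eqv B0' B1' ∨ (B0', B1') ∈ W) ∨
    (∃ (a : A) (B1' : S), step p.2 a B1' ∧
      ∀ B0' : S, WTrace step τ p.1 (obsWord τ a) B0' → ¬ eqv B0' B1' ∨ (B0', B1') ∈ W)

section Aux

variable {S A : Type*} [DecidableEq A] (step : S → A → S → Prop) (τ : A) (eqv : S → S → Prop)

private lemma wtrace_reflTransGen {s t : S} {w : List A}
    (h : WTrace step τ s w t) :
    Relation.ReflTransGen (fun x y => ∃ a, step y a x) t s := by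
  induction h with
  | refl s => exact Relation.ReflTransGen.refl
  | tau hstep _ ih => exact ih.tail ⟨_, hstep⟩
  | vis _ hstep _ ih => exact ih.tail ⟨_, hstep⟩

private lemma bisim_symm {X Y : S} (h : Bisimilar step τ eqv X Y) :
    Bisimilar step τ eqv Y X := by
  obtain ⟨R, hR, hXY⟩ := h
  exact ⟨R, hR, hR.1 hXY⟩

private lemma bisim_is_bisim : IsBisimulation step τ eqv (Bisimilar step τ eqv) := by
  refine ⟨fun X Y h => bisim_symm step τ eqv h, ?_⟩
  rintro X Y ⟨R, hR, hXY⟩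
  obtain ⟨heq, hstep⟩ := hR.2 X Y hXY
  refine ⟨heq, fun a X' h => ?_⟩
  obtain ⟨Y', hw, hr⟩ := hstep a X' h
  exact ⟨Y', hw, R, hR, hr⟩

/-- Product well-foundedness: strict in one coordinate, weak in the other. -/
private lemma acc_pair (r : S → S → Prop) :
    ∀ x : S, Acc (Relation.TransGen r) x → ∀ y : S, Acc (Relation.TransGen r) y →
    Acc (fun p q : S × S =>
      (Relation.TransGen r p.1 q.1 ∧ Relation.ReflTransGen r p.2 q.2) ∨
      (Relation.ReflTransGen r p.1 q.1 ∧ Relation.TransGen r p.2 q.2)) (x, y) := by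
  intro x hx
  induction hx with
  | intro x hx ihx =>
    intro y hy
    induction hy with
    | intro y hy ihy =>
      constructor
      rintro ⟨x', y'⟩ (⟨hT, hRT⟩ | ⟨hRT, hT⟩)
      · have hy' : Acc (Relation.TransGen r) y' := by
          rcases (Relation.reflTransGen_iff_eq_or_transGen).mp hRT with rfl | h
          · exact Acc.intro y hy
          · exact hy y' h
        exact ihx x' hT y' hy'
      · rcases (Relation.reflTransGen_iff_eq_or_transGen).mp hRT with rfl | h
        · exact ihy y' hT
        · exact ihx x' h y' (hy y' hT)

end Aux

/-- for a finitely branching, well-founded transition system (bounded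
processes) with reflexive symmetric static equivalence, two statically equivalent
states are non-bisimilar iff there is a witness of non-bisimilarity containing them. -/

theorem non_bisimilarity_iff_witness {S A : Type*} [DecidableEq A]
    (step : S → A → S → Prop) (τ : A) (eqv : S → S → Prop)
    (hrefl : ∀ s : S, eqv s s) (hsym : ∀ s t : S, eqv s t → eqv t s)
    (hfb : ∀ s : S, {p : A × S | step s p.1 p.2}.Finite)
    (hwf : ¬ ∃ f : ℕ → S, ∀ n : ℕ, ∃ a : A, step (f n) a (f (n + 1)))
    (A0 A1 : S) (heq : eqv A0 A1) :
    ¬ Bisimilar step τ eqv A0 A1 ↔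
      ∃ W : Set (S × S), (A0, A1) ∈ W ∧ IsNonBisimWitness step τ eqv W := by
  -- the one-step "predecessor" relation and its well-foundedness
  set r : S → S → Prop := fun x y => ∃ a, step y a x with hr_def
  have hwfr : WellFounded r := by
    constructor
    by_contra h
    push_neg at h
    obtain ⟨x0, hx0⟩ := h
    have key : ∀ x : S, ¬ Acc r x → ∃ y, r y x ∧ ¬ Acc r y := by
      intro x hx
      by_contra hc
      push_neg at hc
      exact hx (Acc.intro x hc)
    choose g hg1 hg2 using key
    let f : ℕ → {x : S // ¬ Acc r x} := fun n =>
      Nat.rec ⟨x0, hx0⟩ (fun _ p => ⟨g p.1 p.2, hg2 p.1 p.2⟩) n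
    exact hwf ⟨fun n => (f n).1, fun n => hg1 (f n).1 (f n).2⟩
  have hwfT : WellFounded (Relation.TransGen r) := hwfr.transGen
  constructor
  · -- non-bisimilarity ⇒ witness
    intro hnb
    refine ⟨{p : S × S | eqv p.1 p.2 ∧ ¬ Bisimilar step τ eqv p.1 p.2},
      ⟨heq, hnb⟩, fun p hp => hp.1, ?_⟩
    rintro ⟨B0, B1⟩ ⟨heqB, hnbB⟩
    by_contra hc
    push_neg at hc
    obtain ⟨h0, h1⟩ := hc
    -- build a bisimulation showing B0 ≈ B1, contradiction
    apply hnbB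
    refine ⟨fun X Y => Bisimilar step τ eqv X Y ∨ (X = B0 ∧ Y = B1) ∨ (X = B1 ∧ Y = B0),
      ⟨?_, ?_⟩, Or.inr (Or.inl ⟨rfl, rfl⟩)⟩
    · rintro X Y (h | ⟨rfl, rfl⟩ | ⟨rfl, rfl⟩)
      · exact Or.inl (bisim_symm step τ eqv h)
      · exact Or.inr (Or.inr ⟨rfl, rfl⟩)
      · exact Or.inr (Or.inl ⟨rfl, rfl⟩)
    · rintro X Y (h | ⟨rfl, rfl⟩ | ⟨rfl, rfl⟩)
      · obtain ⟨heq', hstep'⟩ := (bisim_is_bisim step τ eqv).2 X Y h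
        refine ⟨heq', fun a X' hX' => ?_⟩
        obtain ⟨Y', hw, hb⟩ := hstep' a X' hX'
        exact ⟨Y', hw, Or.inl hb⟩
      · refine ⟨heqB, fun a X' hX' => ?_⟩
        obtain ⟨Y', hw, he', hnw⟩ := h0 a X' hX'
        have : Bisimilar step τ eqv X' Y' := by
          by_contra hb
          exact hnw ⟨he', hb⟩
        exact ⟨Y', hw, Or.inl this⟩
      · refine ⟨hsym _ _ heqB, fun a X' hX' => ?_⟩
        obtain ⟨Y', hw, he', hnw'⟩ := h1 a X' hX'
        have hnw : ¬(eqv Y' X' ∧ ¬ Bisimilar step τ eqv Y' X') := hnw'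
        have : Bisimilar step τ eqv Y' X' := by
          by_contra hb
          exact hnw ⟨he', hb⟩
        exact ⟨Y', hw, Or.inl (bisim_symm step τ eqv this)⟩
  · -- witness ⇒ non-bisimilarity
    rintro ⟨W, hmem, hWeq, hWstep⟩ ⟨R, hR, hAB⟩
    -- by well-founded induction on pairs
    have main : ∀ p : S × S,
        Acc (fun p q : S × S =>
          (Relation.TransGen r p.1 q.1 ∧ Relation.ReflTransGen r p.2 q.2) ∨
          (Relation.ReflTransGen r p.1 q.1 ∧ Relation.TransGen r p.2 q.2)) p →
        R p.1 p.2 → p ∉ W := by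
      intro p hacc
      induction hacc with
      | intro p _ ih =>
        obtain ⟨B0, B1⟩ := p
        intro hRB hpW
        rcases hWstep _ hpW with ⟨a, B0', hst, hall⟩ | ⟨a, B1', hst, hall⟩
        · obtain ⟨B1', hw, hR'⟩ := (hR.2 B0 B1 hRB).2 a B0' hst
          have heqv' : eqv B0' B1' := (hR.2 B0' B1' hR').1
          have hW' : (B0', B1') ∈ W := by
            rcases hall B1' hw with h | h
            · exact absurd heqv' h
            · exact h
          exact ih (B0', B1')
            (Or.inl ⟨Relation.TransGen.single ⟨a, hst⟩,
              wtrace_reflTransGen step τ hw⟩) hR' hW'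
        · have hRB' : R B1 B0 := hR.1 hRB
          obtain ⟨B0', hw, hR'⟩ := (hR.2 B1 B0 hRB').2 a B1' hst
          have heqv' : eqv B0' B1' := hsym _ _ ((hR.2 B1' B0' hR').1)
          have hW' : (B0', B1') ∈ W := by
            rcases hall B0' hw with h | h
            · exact absurd heqv' h
            · exact h
          exact ih (B0', B1')
            (Or.inr ⟨wtrace_reflTransGen step τ hw,
              Relation.TransGen.single ⟨a, hst⟩⟩) (hR.1 hR') hW'
    exact main (A0, A1) (acc_pair r A0 (hwfT.apply A0) A1 (hwfT.apply A1)) hAB hmem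
end

section
/- Under the same well-foundedness hypotheses, A₀ does not simulate-precede A₁ (A₀ ⋢ A₁) with A₀ ∼ A₁ if and only if there exists a witness of non-simulation for (A₀, A₁): a set W of pairs of statically equivalent states such that for every (B₀, B₁) ∈ W there is a transition B₀ →^α B'₀ such that for every B₁ ⟹^ᾱ B'₁, either B'₀ ≁ B'₁ or (B'₀, B'₁) ∈ W. -/
/-- A simulation contained in static equivalence. -/
def IsSimulation {S A : Type*} [DecidableEq A] (step : S → A → S → Prop) (τ : A)
    (eqv : S → S → Prop) (R : S → S → Prop) : Prop :=
  ∀ X Y : S, R X Y → eqv X Y ∧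
    ∀ (a : A) (X' : S), step X a X' → ∃ Y' : S, WTrace step τ Y (obsWord τ a) Y' ∧ R X' Y'

/-- The simulation preorder ⊑ : the largest simulation (union characterization). -/
def SimPreorder {S A : Type*} [DecidableEq A] (step : S → A → S → Prop) (τ : A)
    (eqv : S → S → Prop) (X Y : S) : Prop :=
  ∃ R : S → S → Prop, IsSimulation step τ eqv R ∧ R X Y

/-- A witness of non-simulation: a set `W` of pairs of statically equivalent states
such that for every `(B₀,B₁) ∈ W` there is a transition `B₀ →^α B'₀` such that for
every matching `B₁ ⟹^ᾱ B'₁`, either `B'₀ ≁ B'₁` or `(B'₀,B'₁) ∈ W`. -/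
def IsNonSimWitness {S A : Type*} [DecidableEq A] (step : S → A → S → Prop) (τ : A)
    (eqv : S → S → Prop) (W : Set (S × S)) : Prop :=
  (∀ p ∈ W, eqv p.1 p.2) ∧
  ∀ p ∈ W, ∃ (a : A) (B0' : S), step p.1 a B0' ∧
    ∀ B1' : S, WTrace step τ p.2 (obsWord τ a) B1' → ¬ eqv B0' B1' ∨ (B0', B1') ∈ W

/-- under the same well-foundedness (bounded processes) hypotheses,
`A₀` does not simulate-precede `A₁` (with `A₀ ∼ A₁`) iff there is a witness of
non-simulation for `(A₀, A₁)`. -/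
theorem non_simulation_iff_witness {S A : Type*} [DecidableEq A]
    (step : S → A → S → Prop) (τ : A) (eqv : S → S → Prop)
    (hrefl : ∀ s : S, eqv s s) (hsym : ∀ s t : S, eqv s t → eqv t s)
    (hfb : ∀ s : S, {p : A × S | step s p.1 p.2}.Finite)
    (hwf : ¬ ∃ f : ℕ → S, ∀ n : ℕ, ∃ a : A, step (f n) a (f (n + 1)))
    (A0 A1 : S) (heq : eqv A0 A1) :
    ¬ SimPreorder step τ eqv A0 A1 ↔
      ∃ W : Set (S × S), (A0, A1) ∈ W ∧ IsNonSimWitness step τ eqv W := by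
  constructor
  · -- build witness from non-simulation
    intro hns
    refine ⟨{p | eqv p.1 p.2 ∧ ¬ SimPreorder step τ eqv p.1 p.2}, ⟨heq, hns⟩, ?_, ?_⟩
    · exact fun p hp => hp.1
    · rintro ⟨B0, B1⟩ ⟨hpe, hpns⟩
      by_contra hcon
      push_neg at hcon
      apply hpns
      refine ⟨fun X Y => SimPreorder step τ eqv X Y ∨ (X = B0 ∧ Y = B1), ?_, Or.inr ⟨rfl, rfl⟩⟩
      rintro X Y (⟨R, hR, hXY⟩ | ⟨rfl, rfl⟩)
      · refine ⟨(hR X Y hXY).1, fun a X' hst => ?_⟩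
        obtain ⟨Y', htr, hY'⟩ := (hR X Y hXY).2 a X' hst
        exact ⟨Y', htr, Or.inl ⟨R, hR, hY'⟩⟩
      · refine ⟨hpe, fun a X' hst => ?_⟩
        obtain ⟨Y', htr, hY'⟩ := hcon a X' hst
        rcases hY' with ⟨he, hsim⟩
        refine ⟨Y', htr, Or.inl ?_⟩
        by_contra hns'
        exact hsim ⟨he, hns'⟩
  · -- witness implies non-simulation
    rintro ⟨W, hmem, hWe, hWstep⟩ ⟨R, hR, hRA⟩
    set P : S × S → Prop := fun p => p ∈ W ∧ R p.1 p.2 with hP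
    have key : ∀ p : {p : S × S // P p}, ∃ q : {p : S × S // P p},
        ∃ a, step p.1.1 a q.1.1 := by
      rintro ⟨⟨B0, B1⟩, hW, hRB⟩
      obtain ⟨a, B0', hst, hmatch⟩ := hWstep (B0, B1) hW
      obtain ⟨B1', htr, hRB'⟩ := (hR B0 B1 hRB).2 a B0' hst
      rcases hmatch B1' htr with hne | hin
      · exact absurd (hR B0' B1' hRB').1 hne
      · exact ⟨⟨(B0', B1'), hin, hRB'⟩, a, hst⟩
    choose F hF using key
    let f : ℕ → {p : S × S // P p} := fun n =>
      Nat.rec ⟨(A0, A1), hmem, hRA⟩ (fun _ p => F p) n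
    exact hwf ⟨fun n => (f n).1.1, fun n => hF (f n)⟩
end

section
/- Let X be a set of second-order variables each carrying a type i ∈ ℕ, where a variable of type i may only be instantiated by terms over the signature, constants, axioms ax₁,…,ax_i and variables of type ≤ i. Then the typed unification algorithm on second-order equations terminates: the measure μ(E) = (set of second-order variables of E ordered by multiset extension of the type order, multiset of variable occurrences of E, multiset of equation sizes of E), ordered lexicographically, strictly decreases at each recursive call of the algorithm. -/
/-- Second-order terms over a signature `F`: axioms `ax_k`, typed variables `X^i`
(a name `n` together with a type `i : ℕ`), constants and binary function symbols. -/
inductive STm (F : Type*) : Type _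
  | ax : ℕ → STm F
  | var : ℕ → ℕ → STm F
  | cst : F → STm F
  | app : F → STm F → STm F → STm F

namespace STm

variable {F : Type*}

/-- Multiset of variable occurrences (name, type) of a term. -/
def varOccs : STm F → Multiset (ℕ × ℕ)
  | .ax _ => 0
  | .var n i => {(n, i)}
  | .cst _ => 0
  | .app _ a b => varOccs a + varOccs b

/-- Multiset of axiom indices occurring in a term. -/
def axOccs : STm F → Multiset ℕ
  | .ax k => {k}
  | .var _ _ => 0
  | .cst _ => 0
  | .app _ a b => axOccs a + axOccs b

/-- Number of function symbols of a term. -/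
def fsize : STm F → ℕ
  | .ax _ => 0
  | .var _ _ => 0
  | .cst _ => 1
  | .app _ a b => fsize a + fsize b + 1

/-- `maxar ξ`: the minimal `i` with `ξ ∈ R_i`, i.e. the maximum of the axiom indices
and variable types occurring in `ξ`. -/
def maxar : STm F → ℕ
  | .ax k => k
  | .var _ i => i
  | .cst _ => 0
  | .app _ a b => max (maxar a) (maxar b)

/-- Substitute the single variable `v` by the term `r`. -/
def sub1 (v : ℕ × ℕ) (r : STm F) : STm F → STm F
  | .ax k => .ax k
  | .var n i => if (n, i) = v then r else .var n i
  | .cst f => .cst f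
  | .app f a b => .app f (sub1 v r a) (sub1 v r b)

/-- `ξ` is a variable. -/
def isVar (t : STm F) : Prop := ∃ n i : ℕ, t = STm.var n i

/-- Occurs-check failure: `X^{n,i}` occurs in `ξ` and `ξ ≠ X`. -/
def occursBad (n i : ℕ) (ξ : STm F) : Prop :=
  (n, i) ∈ varOccs ξ ∧ ξ ≠ STm.var n i

end STm

/-- A system of second-order equations. -/
abbrev EqSys (F : Type*) := List (STm F × STm F)

/-- Substitute the variable `v` by `r` throughout an equation system. -/
def subEqs {F : Type*} (v : ℕ × ℕ) (r : STm F) (E : EqSys F) : EqSys F :=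
  E.map (fun e => (STm.sub1 v r e.1, STm.sub1 v r e.2))

/-- Multiset of all variable occurrences of an equation system. -/
def eqVarOccs {F : Type*} (E : EqSys F) : Multiset (ℕ × ℕ) :=
  (E.map (fun e => STm.varOccs e.1 + STm.varOccs e.2)).sum

/-- The (finite) set of second-order variables of an equation system. -/
def sysVarSet {F : Type*} (E : EqSys F) : Finset (ℕ × ℕ) := (eqVarOccs E).toFinset

/-- The recursive calls of the typed second-order unification algorithm `mgu`:
decomposition of equal root symbols, retyping of a higher-typed variable occurring in
the right-hand side of a variable equation by a fresh lower-typed variable, and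
variable elimination (the failure cases produce no recursive call). -/
inductive MguStep (F : Type*) : EqSys F → EqSys F → Prop
  | decompApp (f : F) (a b c d : STm F) (φ : EqSys F) :
      MguStep F ((STm.app f a b, STm.app f c d) :: φ) ((a, c) :: (b, d) :: φ)
  | decompCst (f : F) (φ : EqSys F) :
      MguStep F ((STm.cst f, STm.cst f) :: φ) φ
  | decompAx (k : ℕ) (φ : EqSys F) :
      MguStep F ((STm.ax k, STm.ax k) :: φ) φ
  | retype (n i : ℕ) (ξ : STm F) (m j m' : ℕ) (φ : EqSys F)
      (hocc : ¬ STm.occursBad n i ξ)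
      (hax : ∀ k ∈ STm.axOccs ξ, k ≤ i)
      (hnv : ¬ STm.isVar ξ)
      (hmem : (m, j) ∈ STm.varOccs ξ) (hij : i < j)
      (hfresh : ∀ k : ℕ, (m', k) ∉ sysVarSet ((STm.var n i, ξ) :: φ)) :
      MguStep F ((STm.var n i, ξ) :: φ)
        (subEqs (m, j) (STm.var m' i) ((STm.var n i, ξ) :: φ))
  | elim (n i : ℕ) (ξ : STm F) (φ : EqSys F)
      (hocc : ¬ STm.occursBad n i ξ)
      (hty : STm.maxar ξ ≤ i) :
      MguStep F ((STm.var n i, ξ) :: φ) (subEqs (n, i) ξ φ)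

/-- The (Dershowitz–Manna) multiset extension of `<` on `ℕ`. -/
def DMLt (s t : Multiset ℕ) : Prop :=
  ∃ X Y Z : Multiset ℕ, X ≠ 0 ∧ t = Z + X ∧ s = Z + Y ∧ ∀ y ∈ Y, ∃ x ∈ X, y < x

/-- First measure component: the set of second-order variables of `E`, compared by the
multiset extension of the type order (i.e. as the multiset of their types). -/
def mu1 {F : Type*} (E : EqSys F) : Multiset ℕ := (sysVarSet E).val.map Prod.snd

/-- Second measure component: the multiset of variable occurrences of `E` (with
multiplicity), compared via their types. -/
def mu2 {F : Type*} (E : EqSys F) : Multiset ℕ := (eqVarOccs E).map Prod.snd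

/-- Third measure component: the multiset of the sizes of the equations of `E`. -/
def mu3 {F : Type*} (E : EqSys F) : Multiset ℕ :=
  ↑(E.map (fun e => STm.fsize e.1 + STm.fsize e.2))

/-- Lexicographic composition of the three multiset orders. -/
def MeasureLt {F : Type*} (E' E : EqSys F) : Prop :=
  DMLt (mu1 E') (mu1 E) ∨
    (mu1 E' = mu1 E ∧
      (DMLt (mu2 E') (mu2 E) ∨ (mu2 E' = mu2 E ∧ DMLt (mu3 E') (mu3 E))))

section Aux

variable {F : Type*}

lemma varOccs_sub1 (v : ℕ × ℕ) (r t : STm F) :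
    STm.varOccs (STm.sub1 v r t) =
      (STm.varOccs t).bind (fun w => if w = v then STm.varOccs r else {w}) := by
  induction t with
  | ax k => simp [STm.sub1, STm.varOccs]
  | var n i =>
      by_cases h : (n, i) = v <;> simp [STm.sub1, STm.varOccs, h]
  | cst f => simp [STm.sub1, STm.varOccs]
  | app f a b iha ihb =>
      simp [STm.sub1, STm.varOccs, iha, ihb, Multiset.add_bind]

lemma eqVarOccs_cons (e : STm F × STm F) (E : EqSys F) :
    eqVarOccs (e :: E) = (STm.varOccs e.1 + STm.varOccs e.2) + eqVarOccs E := by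
  simp [eqVarOccs]

lemma eqVarOccs_subEqs (v : ℕ × ℕ) (r : STm F) (E : EqSys F) :
    eqVarOccs (subEqs v r E) =
      (eqVarOccs E).bind (fun w => if w = v then STm.varOccs r else {w}) := by
  induction E with
  | nil => simp [eqVarOccs, subEqs]
  | cons e E ih =>
      show eqVarOccs ((STm.sub1 v r e.1, STm.sub1 v r e.2) :: subEqs v r E) = _
      rw [eqVarOccs_cons, eqVarOccs_cons, ih, Multiset.add_bind, Multiset.add_bind]
      simp [varOccs_sub1]

lemma sub1_self (n i : ℕ) (t : STm F) : STm.sub1 (n, i) (STm.var n i) t = t := by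
  induction t with
  | ax k => rfl
  | var m j =>
      by_cases h : (m, j) = (n, i)
      · simp [STm.sub1, h]
        exact ⟨(Prod.mk.injEq .. ▸ h).1.symm, (Prod.mk.injEq .. ▸ h).2.symm⟩
      · simp [STm.sub1, h]
  | cst f => rfl
  | app f a b iha ihb => simp [STm.sub1, iha, ihb]

lemma dmlt_of_lt {s t : Multiset ℕ} (h : s < t) : DMLt s t := by
  refine ⟨t - s, 0, s, ?_, ?_, by simp, by simp⟩
  · intro h0
    exact absurd (tsub_eq_zero_iff_le.mp h0) h.not_ge
  · rw [add_tsub_cancel_of_le h.le]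

lemma dmlt_map_of_ssubset {s t : Finset (ℕ × ℕ)} (h : s ⊂ t) :
    DMLt (s.val.map Prod.snd) (t.val.map Prod.snd) := by
  apply dmlt_of_lt
  have hv : s.val < t.val := Finset.val_lt_iff.mpr h
  obtain ⟨a, ha⟩ := Multiset.lt_iff_cons_le.mp hv
  refine Multiset.lt_iff_cons_le.mpr ⟨a.2, ?_⟩
  simpa using Multiset.map_le_map (f := Prod.snd) ha

lemma mem_sysVarSet {E : EqSys F} {w : ℕ × ℕ} :
    w ∈ sysVarSet E ↔ w ∈ eqVarOccs E := by
  simp [sysVarSet]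

lemma mu3_cons (e : STm F × STm F) (E : EqSys F) :
    mu3 (e :: E) = (STm.fsize e.1 + STm.fsize e.2) ::ₘ mu3 E := by
  simp [mu3]

lemma cons_eq_add_singleton (x : ℕ) (Z : Multiset ℕ) : x ::ₘ Z = Z + {x} := by
  rw [← Multiset.singleton_add, add_comm]

lemma cons_cons_eq_add_pair (x y : ℕ) (Z : Multiset ℕ) : x ::ₘ y ::ₘ Z = Z + {x, y} := by
  rw [cons_eq_add_singleton, cons_eq_add_singleton, add_assoc]
  congr 1
  rw [add_comm, Multiset.singleton_add]
  rfl

end Aux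

/-- the typed second-order unification algorithm terminates: the measure
μ(E) = (variable set ordered by the multiset extension of the type order, multiset of
variable occurrences, multiset of equation sizes), ordered lexicographically, strictly
decreases at each recursive call of the algorithm. -/
theorem mgu_measure_decreases {F : Type*} (E E' : EqSys F) (h : MguStep F E E') :
    MeasureLt E' E := by
  cases h with
  | decompApp f a b c d φ =>
      have hv : eqVarOccs ((a, c) :: (b, d) :: φ) =
          eqVarOccs ((STm.app f a b, STm.app f c d) :: φ) := by
        simp only [eqVarOccs_cons, STm.varOccs]
        abel
      refine Or.inr ⟨?_, Or.inr ⟨?_, ?_⟩⟩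
      · simp [mu1, sysVarSet, hv]
      · simp [mu2, hv]
      · rw [mu3_cons, mu3_cons, mu3_cons]
        refine ⟨{STm.fsize (STm.app f a b) + STm.fsize (STm.app f c d)},
          {STm.fsize a + STm.fsize c, STm.fsize b + STm.fsize d}, mu3 φ,
          by simp, ?_, ?_, ?_⟩
        · exact cons_eq_add_singleton _ _
        · exact cons_cons_eq_add_pair _ _ _
        · intro y hy
          simp only [Multiset.insert_eq_cons, Multiset.mem_cons,
            Multiset.mem_singleton] at hy
          refine ⟨_, Multiset.mem_singleton_self _, ?_⟩
          rcases hy with hy | hy <;> subst hy <;> simp [STm.fsize] <;> omega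
  | decompCst f φ =>
      have hv : eqVarOccs E' = eqVarOccs ((STm.cst f, STm.cst f) :: E') := by
        simp [eqVarOccs_cons, STm.varOccs]
      refine Or.inr ⟨by simp [mu1, sysVarSet, hv], Or.inr ⟨by simp [mu2, hv], ?_⟩⟩
      rw [mu3_cons]
      exact dmlt_of_lt (Multiset.lt_cons_self _ _)
  | decompAx k φ =>
      have hv : eqVarOccs E' = eqVarOccs ((STm.ax k, STm.ax k) :: E') := by
        simp [eqVarOccs_cons, STm.varOccs]
      refine Or.inr ⟨by simp [mu1, sysVarSet, hv], Or.inr ⟨by simp [mu2, hv], ?_⟩⟩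
      rw [mu3_cons]
      exact dmlt_of_lt (Multiset.lt_cons_self _ _)
  | retype n i ξ m j m' φ hocc hax hnv hmem hij hfresh =>
      set E := (STm.var n i, ξ) :: φ with hE
      set g : ℕ × ℕ → ℕ × ℕ := fun w => if w = (m, j) then (m', i) else w with hg
      have hmap : eqVarOccs (subEqs (m, j) (STm.var m' i) E) = (eqVarOccs E).map g := by
        rw [eqVarOccs_subEqs]
        rw [show (fun w => if w = (m, j) then STm.varOccs (STm.var m' i)
              else ({w} : Multiset (ℕ × ℕ))) = fun w => {g w} from
          funext fun w => by by_cases h : w = (m, j) <;> simp [hg, h, STm.varOccs]]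
        exact Multiset.bind_singleton _ _
      have hS : sysVarSet (subEqs (m, j) (STm.var m' i) E) = (sysVarSet E).image g := by
        simp [sysVarSet, hmap, Multiset.toFinset_map]
      have hmemS : (m, j) ∈ sysVarSet E := by
        rw [mem_sysVarSet, eqVarOccs_cons]
        simp only [Multiset.mem_add]
        exact Or.inl (Or.inr hmem)
      set s : Multiset (ℕ × ℕ) := (sysVarSet E).val.erase (m, j) with hs
      have hcons : (sysVarSet E).val = (m, j) ::ₘ s := (Multiset.cons_erase hmemS).symm
      have hnd : s.Nodup := (sysVarSet E).nodup.erase _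
      have hnotmem : ∀ w ∈ s, w ≠ (m, j) := by
        intro w hw
        have : (sysVarSet E).val.Nodup := (sysVarSet E).nodup
        rw [hcons] at this
        rintro rfl
        exact (Multiset.nodup_cons.mp this).1 hw
      have hsmap : s.map g = s := by
        rw [show s.map g = s.map id from
          Multiset.map_congr rfl fun w hw => by simp [hg, hnotmem w hw]]
        exact Multiset.map_id s
      have hm'notmem : (m', i) ∉ s := by
        intro hmem'
        exact hfresh i (by
          have : (m', i) ∈ (sysVarSet E).val := Multiset.mem_of_mem_erase hmem'
          exact this)
      have hval' : (sysVarSet (subEqs (m, j) (STm.var m' i) E)).val = (m', i) ::ₘ s := by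
        rw [hS, Finset.image_val, hcons, Multiset.map_cons, hsmap]
        rw [show g (m, j) = (m', i) from if_pos rfl]
        exact Multiset.Nodup.dedup (Multiset.nodup_cons.mpr ⟨hm'notmem, hnd⟩)
      refine Or.inl ?_
      rw [mu1, mu1, hval', hcons, Multiset.map_cons, Multiset.map_cons]
      exact ⟨{j}, {i}, s.map Prod.snd,
        by simp,
        (cons_eq_add_singleton _ _),
        (cons_eq_add_singleton _ _),
        fun y hy => ⟨j, Multiset.mem_singleton_self _, by
          rw [Multiset.mem_singleton] at hy; subst hy; exact hij⟩⟩
  | elim n i ξ φ hocc hty =>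
      by_cases hin : (n, i) ∈ STm.varOccs ξ
      · have hξ : ξ = STm.var n i := by
          by_contra hne
          exact hocc ⟨hin, hne⟩
        subst hξ
        have hsub1 : subEqs (n, i) (STm.var n i) φ = φ := by
          unfold subEqs
          simp [sub1_self]
        rw [hsub1]
        have hsub : sysVarSet φ ⊆ sysVarSet ((STm.var n i, STm.var n i) :: φ) := by
          intro w hw
          rw [mem_sysVarSet] at hw ⊢
          rw [eqVarOccs_cons]
          simp only [Multiset.mem_add]
          exact Or.inr hw
        by_cases heq : sysVarSet φ = sysVarSet ((STm.var n i, STm.var n i) :: φ)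
        · refine Or.inr ⟨by rw [mu1, mu1, heq], Or.inl ?_⟩
          have h2 : mu2 ((STm.var n i, STm.var n i) :: φ) = i ::ₘ i ::ₘ mu2 φ := by
            rw [mu2, eqVarOccs_cons]
            simp [STm.varOccs, mu2]
          rw [h2]
          exact dmlt_of_lt ((Multiset.lt_cons_self _ _).trans (Multiset.lt_cons_self _ _))
        · exact Or.inl (dmlt_map_of_ssubset (hsub.ssubset_of_ne heq))
      · refine Or.inl (dmlt_map_of_ssubset ?_)
        constructor
        · intro w hw
          rw [mem_sysVarSet, eqVarOccs_subEqs, Multiset.mem_bind] at hw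
          obtain ⟨u, hu, hw⟩ := hw
          rw [mem_sysVarSet, eqVarOccs_cons]
          simp only [Multiset.mem_add]
          by_cases hu' : u = (n, i)
          · rw [if_pos hu'] at hw
            exact Or.inl (Or.inr hw)
          · rw [if_neg hu', Multiset.mem_singleton] at hw
            subst hw
            exact Or.inr hu
        · intro hall
          have hni : (n, i) ∈ sysVarSet ((STm.var n i, ξ) :: φ) := by
            rw [mem_sysVarSet, eqVarOccs_cons]
            simp [STm.varOccs]
          have := hall hni
          rw [mem_sysVarSet, eqVarOccs_subEqs, Multiset.mem_bind] at this
          obtain ⟨u, hu, hthis⟩ := this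
          by_cases hu' : u = (n, i)
          · rw [if_pos hu'] at hthis
            exact hin hthis
          · rw [if_neg hu', Multiset.mem_singleton] at hthis
            exact hu' hthis.symm
end

section
/- Transitivity of consequence: let S, S' be sets of solved deduction facts, φ = {X_i ⊢ u_i}_{i=1}^n with pairwise distinct variables X_i, and (ξ, t) ∈ conseq(S ∪ φ). If Σ and σ are substitutions such that for every i, (X_i Σ, u_i σ) ∈ conseq(SΣσ ∪ S'), then (ξΣ, tσ) ∈ conseq(SΣσ ∪ S'). -/
/-- First-order (constructor) terms. -/
inductive FOTm (Fc C N V : Type*) : Type _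
  | var : V → FOTm Fc C N V
  | nm : N → FOTm Fc C N V
  | cst : C → FOTm Fc C N V
  | app : Fc → FOTm Fc C N V → FOTm Fc C N V → FOTm Fc C N V

/-- Recipes (second-order terms). -/
inductive Rcp (Fc Fd C A W : Type*) : Type _
  | var : W → Rcp Fc Fd C A W
  | ax : A → Rcp Fc Fd C A W
  | cst : C → Rcp Fc Fd C A W
  | capp : Fc → Rcp Fc Fd C A W → Rcp Fc Fd C A W → Rcp Fc Fd C A W
  | dapp : Fd → Rcp Fc Fd C A W → Rcp Fc Fd C A W → Rcp Fc Fd C A W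

/-- Homomorphic application of a first-order substitution. -/
def FOTm.substT {Fc C N V : Type*} (σ : V → FOTm Fc C N V) :
    FOTm Fc C N V → FOTm Fc C N V
  | .var x => σ x
  | .nm n => .nm n
  | .cst c => .cst c
  | .app f a b => .app f (a.substT σ) (b.substT σ)

/-- Homomorphic application of a second-order substitution to a recipe. -/
def Rcp.substR {Fc Fd C A W : Type*} (sb : W → Rcp Fc Fd C A W) :
    Rcp Fc Fd C A W → Rcp Fc Fd C A W
  | .var X => sb X
  | .ax a => .ax a
  | .cst c => .cst c
  | .capp f a b => .capp f (a.substR sb) (b.substR sb)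
  | .dapp f a b => .dapp f (a.substR sb) (b.substR sb)

/-- `conseq S`: closure of the deduction facts `S` under constructor contexts. -/
inductive Conseq {Fc Fd C A W N V : Type*}
    (S : Set (Rcp Fc Fd C A W × FOTm Fc C N V)) :
    Rcp Fc Fd C A W → FOTm Fc C N V → Prop
  | base {ξ : Rcp Fc Fd C A W} {t : FOTm Fc C N V} : (ξ, t) ∈ S → Conseq S ξ t
  | cst (c : C) : Conseq S (Rcp.cst c) (FOTm.cst c)
  | capp (f : Fc) {ξ₁ ξ₂ : Rcp Fc Fd C A W} {t₁ t₂ : FOTm Fc C N V} :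
      Conseq S ξ₁ t₁ → Conseq S ξ₂ t₂ →
      Conseq S (Rcp.capp f ξ₁ ξ₂) (FOTm.app f t₁ t₂)

/-- `SΣσ`: application of the second-order substitution `Σ` to the recipes and of the
first-order substitution `σ` to the terms of the facts of `S`. -/
def imageSub {Fc Fd C A W N V : Type*}
    (S : Set (Rcp Fc Fd C A W × FOTm Fc C N V))
    (sb : W → Rcp Fc Fd C A W) (σ : V → FOTm Fc C N V) :
    Set (Rcp Fc Fd C A W × FOTm Fc C N V) :=
  (fun p : Rcp Fc Fd C A W × FOTm Fc C N V => (p.1.substR sb, p.2.substT σ)) '' S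

/-- transitivity of consequence. Let `S`, `S'` be sets of solved
deduction facts, `φ = {X_i ⊢ u_i}` with pairwise distinct variables `X_i`, and
`(ξ, t) ∈ conseq(S ∪ φ)`. If, for every `i`, `(X_i Σ, u_i σ) ∈ conseq(SΣσ ∪ S')`,
then `(ξΣ, tσ) ∈ conseq(SΣσ ∪ S')`. -/
theorem conseq_trans {Fc Fd C A W N V : Type*}
    (S S' : Set (Rcp Fc Fd C A W × FOTm Fc C N V))
    (hS : ∀ p ∈ S, ∀ (f : Fc) (a b : Rcp Fc Fd C A W), p.1 ≠ Rcp.capp f a b)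
    (hS' : ∀ p ∈ S', ∀ (f : Fc) (a b : Rcp Fc Fd C A W), p.1 ≠ Rcp.capp f a b)
    (n : ℕ) (X : Fin n → W) (u : Fin n → FOTm Fc C N V)
    (hinj : Function.Injective X)
    (sb : W → Rcp Fc Fd C A W) (σ : V → FOTm Fc C N V)
    (ξ : Rcp Fc Fd C A W) (t : FOTm Fc C N V)
    (h : Conseq (S ∪ {p | ∃ i : Fin n, p = (Rcp.var (X i), u i)}) ξ t)
    (hX : ∀ i : Fin n, Conseq (imageSub S sb σ ∪ S') (sb (X i)) ((u i).substT σ)) :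
    Conseq (imageSub S sb σ ∪ S') (ξ.substR sb) (t.substT σ) := by
  induction h with
  | base hmem =>
    rcases hmem with hmem | ⟨i, hi⟩
    · exact Conseq.base (Or.inl ⟨_, hmem, rfl⟩)
    · cases hi
      exact hX i
  | cst c => exact Conseq.cst c
  | capp f h1 h2 ih1 ih2 => exact Conseq.capp f ih1 ih2
end
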